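/- Let R_1, …, R_n be pairwise disjoint closed axis-aligned rectangles in ℝ² whose bottom-left vertices (a_m,c_m) satisfy a_1 < a_2 < … < a_n and c_1 > c_2 > … > c_n. Suppose R_i has no incoming arrow in the dependency graph G(R). Then for all indices k < i < l, there is no vertical arrow from R_k to R_l and no horizontal arrow from R_l to R_k. -/

import Mathlib

open Set

/-- `R j` is vertically visible from `R i`: there is a vertical closed segment with one
endpoint in `R i` and the other in `R j` that meets no third region. -/
def VertVis {n : ℕ} (R : Fin n → Set (ℝ × ℝ)) (i j : Fin n) : Prop :=
  ∃ x y₁ y₂ : ℝ, (x, y₁) ∈ R i ∧ (x, y₂) ∈ R j ∧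
    ∀ t ∈ Set.uIcc y₁ y₂, ∀ m : Fin n, m ≠ i → m ≠ j → (x, t) ∉ R m

/-- `R j` is horizontally visible from `R i`: there is a horizontal closed segment with one
endpoint in `R i` and the other in `R j` that meets no third region. -/
def HorVis {n : ℕ} (R : Fin n → Set (ℝ × ℝ)) (i j : Fin n) : Prop :=
  ∃ y x₁ x₂ : ℝ, (x₁, y) ∈ R i ∧ (x₂, y) ∈ R j ∧
    ∀ t ∈ Set.uIcc x₁ x₂, ∀ m : Fin n, m ≠ i → m ≠ j → (t, y) ∉ R m

/-- A vertical arrow from `R i` to `R j` in the dependency graph `G(R)`. -/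
def VertArrow {n : ℕ} (R : Fin n → Set (ℝ × ℝ)) (i j : Fin n) : Prop :=
  i < j ∧ VertVis R i j

/-- A horizontal arrow from `R i` to `R j` in the dependency graph `G(R)`. -/
def HorArrow {n : ℕ} (R : Fin n → Set (ℝ × ℝ)) (i j : Fin n) : Prop :=
  j < i ∧ HorVis R i j

/-- An arrow from `R i` to `R j` in the dependency graph `G(R)`. -/
def Arrow {n : ℕ} (R : Fin n → Set (ℝ × ℝ)) (i j : Fin n) : Prop :=
  VertArrow R i j ∨ HorArrow R i j

/-- If some rectangle `R m₀` (with `m₀ ≠ i`) contains a point strictly above `R i`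
within the horizontal extent of `R i`, then some rectangle lying strictly above `R i`
is vertically visible from `R i`. -/
lemma above_gives_vert {n : ℕ} (a b c d : Fin n → ℝ)
    (hab : ∀ m, a m ≤ b m) (hcd : ∀ m, c m ≤ d m)
    (R : Fin n → Set (ℝ × ℝ))
    (hR : ∀ m, R m = Icc (a m) (b m) ×ˢ Icc (c m) (d m))
    (hdisj : ∀ i j : Fin n, i ≠ j → Disjoint (R i) (R j))
    (i : Fin n) (x' s : ℝ) (hx1 : a i ≤ x') (hx2 : x' ≤ b i) (hs : d i < s)
    (m₀ : Fin n) (hm₀ : m₀ ≠ i) (hpt : (x', s) ∈ R m₀) :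
    ∃ m, d i < c m ∧ VertVis R m i := by
  classical
  have mem : ∀ (m : Fin n) (x y : ℝ),
      (x, y) ∈ R m ↔ (a m ≤ x ∧ x ≤ b m) ∧ (c m ≤ y ∧ y ≤ d m) := by
    intro m x y; rw [hR]; simp [Set.mem_prod, Set.mem_Icc]; tauto
  have memi : (x', d i) ∈ R i := (mem i x' (d i)).2 ⟨⟨hx1, hx2⟩, hcd i, le_refl _⟩
  have key : ∀ m : Fin n, m ≠ i → a m ≤ x' → x' ≤ b m →
      ∀ t, c m ≤ t → d i < t → t ≤ d m → d i < c m := by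
    intro m hmi ham hbm t _ hdt htd
    by_contra h
    push_neg at h
    have h1 : (x', d i) ∈ R m := (mem m x' (d i)).2 ⟨⟨ham, hbm⟩, h, le_trans hdt.le htd⟩
    exact Set.disjoint_left.mp (hdisj m i hmi) h1 memi
  set T : Finset (Fin n) := Finset.univ.filter
    (fun m => m ≠ i ∧ a m ≤ x' ∧ x' ≤ b m ∧ d i < c m ∧ c m ≤ s) with hT
  have hm₀' := (mem m₀ x' s).1 hpt
  have hm₀T : m₀ ∈ T := by
    rw [hT, Finset.mem_filter]
    exact ⟨Finset.mem_univ _, hm₀, hm₀'.1.1, hm₀'.1.2,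
      key m₀ hm₀ hm₀'.1.1 hm₀'.1.2 s hm₀'.2.1 hs hm₀'.2.2, hm₀'.2.1⟩
  obtain ⟨m, hmT, hmin⟩ := T.exists_min_image c ⟨m₀, hm₀T⟩
  rw [hT, Finset.mem_filter] at hmT
  obtain ⟨-, hmi, ham, hbm, hdc, hcs⟩ := hmT
  have hmemm : (x', c m) ∈ R m := (mem m x' (c m)).2 ⟨⟨ham, hbm⟩, le_refl _, hcd m⟩
  refine ⟨m, hdc, x', c m, d i, hmemm, memi, ?_⟩
  intro t ht m' hm'm hm'i hmem
  rw [Set.uIcc_of_ge hdc.le] at ht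
  obtain ⟨htl, htu⟩ := ht
  have hmem' := (mem m' x' t).1 hmem
  rcases eq_or_lt_of_le htl with h | h
  · exact Set.disjoint_left.mp (hdisj m' i hm'i) hmem (h ▸ memi)
  · have hdc' : d i < c m' := key m' hm'i hmem'.1.1 hmem'.1.2 t hmem'.2.1 h hmem'.2.2
    have hm'T : m' ∈ T := by
      rw [hT, Finset.mem_filter]
      exact ⟨Finset.mem_univ _, hm'i, hmem'.1.1, hmem'.1.2, hdc',
        le_trans hmem'.2.1 (le_trans htu hcs)⟩
    have h1 : c m' = c m := le_antisymm (le_trans hmem'.2.1 htu) (hmin m' hm'T)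
    have h2 : t = c m := le_antisymm htu (h1 ▸ hmem'.2.1)
    have : (x', c m) ∈ R m' := h2 ▸ hmem
    exact Set.disjoint_left.mp (hdisj m' m hm'm) this hmemm

/-- If some rectangle `R m₀` (with `m₀ ≠ i`) contains a point strictly to the right of `R i`
within the vertical extent of `R i`, then some rectangle lying strictly to the right of `R i`
is horizontally visible from `R i`. -/
lemma right_gives_hor {n : ℕ} (a b c d : Fin n → ℝ)
    (hab : ∀ m, a m ≤ b m) (hcd : ∀ m, c m ≤ d m)
    (R : Fin n → Set (ℝ × ℝ))
    (hR : ∀ m, R m = Icc (a m) (b m) ×ˢ Icc (c m) (d m))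
    (hdisj : ∀ i j : Fin n, i ≠ j → Disjoint (R i) (R j))
    (i : Fin n) (y' s : ℝ) (hy1 : c i ≤ y') (hy2 : y' ≤ d i) (hs : b i < s)
    (m₀ : Fin n) (hm₀ : m₀ ≠ i) (hpt : (s, y') ∈ R m₀) :
    ∃ m, b i < a m ∧ HorVis R m i := by
  classical
  have mem : ∀ (m : Fin n) (x y : ℝ),
      (x, y) ∈ R m ↔ (a m ≤ x ∧ x ≤ b m) ∧ (c m ≤ y ∧ y ≤ d m) := by
    intro m x y; rw [hR]; simp [Set.mem_prod, Set.mem_Icc]; tauto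
  have memi : (b i, y') ∈ R i := (mem i (b i) y').2 ⟨⟨hab i, le_refl _⟩, hy1, hy2⟩
  have key : ∀ m : Fin n, m ≠ i → c m ≤ y' → y' ≤ d m →
      ∀ t, a m ≤ t → b i < t → t ≤ b m → b i < a m := by
    intro m hmi hcm hdm t _ hbt htb
    by_contra h
    push_neg at h
    have h1 : (b i, y') ∈ R m := (mem m (b i) y').2 ⟨⟨h, le_trans hbt.le htb⟩, hcm, hdm⟩
    exact Set.disjoint_left.mp (hdisj m i hmi) h1 memi
  set T : Finset (Fin n) := Finset.univ.filter
    (fun m => m ≠ i ∧ c m ≤ y' ∧ y' ≤ d m ∧ b i < a m ∧ a m ≤ s) with hT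
  have hm₀' := (mem m₀ s y').1 hpt
  have hm₀T : m₀ ∈ T := by
    rw [hT, Finset.mem_filter]
    exact ⟨Finset.mem_univ _, hm₀, hm₀'.2.1, hm₀'.2.2,
      key m₀ hm₀ hm₀'.2.1 hm₀'.2.2 s hm₀'.1.1 hs hm₀'.1.2, hm₀'.1.1⟩
  obtain ⟨m, hmT, hmin⟩ := T.exists_min_image a ⟨m₀, hm₀T⟩
  rw [hT, Finset.mem_filter] at hmT
  obtain ⟨-, hmi, hcm, hdm, hba, has⟩ := hmT
  have hmemm : (a m, y') ∈ R m := (mem m (a m) y').2 ⟨⟨le_refl _, hab m⟩, hcm, hdm⟩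
  refine ⟨m, hba, y', a m, b i, hmemm, memi, ?_⟩
  intro t ht m' hm'm hm'i hmem
  rw [Set.uIcc_of_ge hba.le] at ht
  obtain ⟨htl, htu⟩ := ht
  have hmem' := (mem m' t y').1 hmem
  rcases eq_or_lt_of_le htl with h | h
  · exact Set.disjoint_left.mp (hdisj m' i hm'i) hmem (h ▸ memi)
  · have hba' : b i < a m' := key m' hm'i hmem'.2.1 hmem'.2.2 t hmem'.1.1 h hmem'.1.2
    have hm'T : m' ∈ T := by
      rw [hT, Finset.mem_filter]
      exact ⟨Finset.mem_univ _, hm'i, hmem'.2.1, hmem'.2.2, hba',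
        le_trans hmem'.1.1 (le_trans htu has)⟩
    have h1 : a m' = a m := le_antisymm (le_trans hmem'.1.1 htu) (hmin m' hm'T)
    have h2 : t = a m := le_antisymm htu (h1 ▸ hmem'.1.1)
    have : (a m, y') ∈ R m' := h2 ▸ hmem
    exact Set.disjoint_left.mp (hdisj m' m hm'm) this hmemm

/-- If `R i` is a source of `G(R)` for an ordered pairwise-disjoint family,
then there is no vertical arrow from `R k` to `R l` and no horizontal arrow from
`R l` to `R k` whenever `k < i < l`. -/
theorem source_separates_arrows {n : ℕ} (a b c d : Fin n → ℝ)
    (hab : ∀ m, a m ≤ b m) (hcd : ∀ m, c m ≤ d m)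
    (R : Fin n → Set (ℝ × ℝ))
    (hR : ∀ m, R m = Icc (a m) (b m) ×ˢ Icc (c m) (d m))
    (hdisj : ∀ i j : Fin n, i ≠ j → Disjoint (R i) (R j))
    (ha : StrictMono a) (hc : StrictAnti c)
    (i : Fin n) (hsource : ∀ k, ¬ Arrow R k i)
    (k l : Fin n) (hki : k < i) (hil : i < l) :
    ¬ VertArrow R k l ∧ ¬ HorArrow R l k := by
  have mem : ∀ (m : Fin n) (x y : ℝ),
      (x, y) ∈ R m ↔ (a m ≤ x ∧ x ≤ b m) ∧ (c m ≤ y ∧ y ≤ d m) := by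
    intro m x y; rw [hR]; simp [Set.mem_prod, Set.mem_Icc]; tauto
  have hki' : k ≠ i := ne_of_lt hki
  have hli' : l ≠ i := (ne_of_lt hil).symm
  have hak : a k < a i := ha hki
  have hal : a i < a l := ha hil
  have hck : c i < c k := hc hki
  have hcl : c l < c i := hc hil
  -- From the two lemmas: a source can't have anything above or to its right (as points).
  have noA : ∀ (x' s : ℝ), a i ≤ x' → x' ≤ b i → d i < s →
      ∀ m₀ : Fin n, m₀ ≠ i → (x', s) ∉ R m₀ := by
    intro x' s h1 h2 h3 m₀ h4 h5
    obtain ⟨m, hm1, hm2⟩ :=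
      above_gives_vert a b c d hab hcd R hR hdisj i x' s h1 h2 h3 m₀ h4 h5
    have hmi : m < i := hc.lt_iff_gt.1 (lt_of_le_of_lt (hcd i) hm1)
    exact hsource m (Or.inl ⟨hmi, hm2⟩)
  have noB : ∀ (y' s : ℝ), c i ≤ y' → y' ≤ d i → b i < s →
      ∀ m₀ : Fin n, m₀ ≠ i → (s, y') ∉ R m₀ := by
    intro y' s h1 h2 h3 m₀ h4 h5
    obtain ⟨m, hm1, hm2⟩ :=
      right_gives_hor a b c d hab hcd R hR hdisj i y' s h1 h2 h3 m₀ h4 h5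
    have hmi : i < m := ha.lt_iff_lt.1 (lt_of_le_of_lt (hab i) hm1)
    exact hsource m (Or.inr ⟨hmi, hm2⟩)
  constructor
  · rintro ⟨-, x, y₁, y₂, hk, hl, -⟩
    have hk' := (mem k x y₁).1 hk
    have hl' := (mem l x y₂).1 hl
    have hxa : a i < x := lt_of_lt_of_le hal hl'.1.1
    have hyc : c i < y₁ := lt_of_lt_of_le hck hk'.2.1
    rcases le_or_gt y₁ (d i) with hyd | hyd
    · rcases le_or_gt x (b i) with hxb | hxb
      · have : (x, y₁) ∈ R i := (mem i x y₁).2 ⟨⟨hxa.le, hxb⟩, hyc.le, hyd⟩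
        exact Set.disjoint_left.mp (hdisj k i hki') hk this
      · exact noB y₁ x hyc.le hyd hxb k hki' hk
    · rcases le_or_gt x (b i) with hxb | hxb
      · exact noA x y₁ hxa.le hxb hyd k hki' hk
      · have : (b i, y₁) ∈ R k := (mem k (b i) y₁).2
          ⟨⟨le_trans hak.le (hab i), le_trans hxb.le hk'.1.2⟩,
            hk'.2.1, hk'.2.2⟩
        exact noA (b i) y₁ (hab i) (le_refl _) hyd k hki' this
  · rintro ⟨-, y, x₁, x₂, hl, hk, -⟩
    have hl' := (mem l x₁ y).1 hl
    have hk' := (mem k x₂ y).1 hk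
    have hxa : a i < x₁ := lt_of_lt_of_le hal hl'.1.1
    have hyc : c i < y := lt_of_lt_of_le hck hk'.2.1
    rcases le_or_gt y (d i) with hyd | hyd
    · rcases le_or_gt x₁ (b i) with hxb | hxb
      · have : (x₁, y) ∈ R i := (mem i x₁ y).2 ⟨⟨hxa.le, hxb⟩, hyc.le, hyd⟩
        exact Set.disjoint_left.mp (hdisj l i hli') hl this
      · exact noB y x₁ hyc.le hyd hxb l hli' hl
    · rcases le_or_gt x₁ (b i) with hxb | hxb
      · exact noA x₁ y hxa.le hxb hyd l hli' hl
      · have : (x₁, c i) ∈ R l := (mem l x₁ (c i)).2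
          ⟨⟨hl'.1.1, hl'.1.2⟩, hcl.le, le_trans (le_trans (hcd i) hyd.le) hl'.2.2⟩
        exact noB (c i) x₁ (le_refl _) (hcd i) hxb l hli' this
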